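/- For m ≥ 1, the average geodesic distance ⟨S_t⟩ = S_t/(V_t(V_t−1)/2) of the star-fractal tree model, where S_t = [2(m+2)^2]^t − (2^t−1)(m+2)^{2t−1} − (m+1)(m+2)^t([2(m+2)]^t−1)/(2(m+2)−1) and V_t = (m+2)^t + 1, satisfies ⟨S_t⟩/2^t → c for a positive constant c as t → ∞; in particular ⟨S_t⟩ grows like 2^t (it is bounded above and below by positive constant multiples of 2^t for large t). -/

import Mathlib

open Filter

/-- For the star-fractal tree model with `m ≥ 1`, the average geodesic distance
`⟨S_t⟩ = S_t/(V_t(V_t-1)/2)` (with the given closed forms of `S_t` and `V_t`)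
satisfies `⟨S_t⟩ / 2^t → c` for some positive constant `c` as `t → ∞`. -/
theorem avg_dist_starFractal_model_asymptotic (m : ℕ) (hm : 1 ≤ m) :
    ∃ c : ℝ, 0 < c ∧
      Tendsto (fun t : ℕ =>
        (((2 * ((m : ℝ) + 2) ^ 2) ^ t
            - ((2 : ℝ) ^ t - 1) * ((m : ℝ) + 2) ^ (2 * t - 1)
            - ((m : ℝ) + 1) * ((m : ℝ) + 2) ^ t * ((2 * ((m : ℝ) + 2)) ^ t - 1)
              / (2 * ((m : ℝ) + 2) - 1)) /
          (((((m : ℝ) + 2) ^ t + 1) * ((((m : ℝ) + 2) ^ t + 1) - 1)) / 2)) / 2 ^ t)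
        atTop (nhds c) := by
  set q : ℝ := (m : ℝ) + 2 with hqdef
  have hm1 : (1 : ℝ) ≤ (m : ℝ) := by exact_mod_cast hm
  have hq3 : (3 : ℝ) ≤ q := by simp only [hqdef]; linarith
  have hq0 : (0 : ℝ) < q := by linarith
  have hqne : q ≠ 0 := hq0.ne'
  have h2q1 : (2 * q - 1) ≠ 0 := by nlinarith
  have hK : ((m : ℝ) + 1) = q - 1 := by simp only [hqdef]; ring
  refine ⟨2 * (1 - 1 / q - ((m : ℝ) + 1) / (2 * q - 1)), ?_, ?_⟩
  · rw [hK]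
    have h1 : 1 - 1 / q - (q - 1) / (2 * q - 1) = (q - 1) ^ 2 / (q * (2 * q - 1)) := by
      rw [eq_div_iff (mul_ne_zero hqne h2q1)]
      have ea : 1 / q * q = 1 := one_div_mul_cancel hqne
      have eb : (q - 1) / (2 * q - 1) * (2 * q - 1) = q - 1 := div_mul_cancel₀ _ h2q1
      linear_combination (-(2 * q - 1)) * ea + (-q) * eb
    rw [h1]
    have := div_pos (by nlinarith : (0:ℝ) < (q - 1) ^ 2)
      (by nlinarith : (0:ℝ) < q * (2 * q - 1))
    linarith
  · have ha : Tendsto (fun t : ℕ => (1 / q) ^ t) atTop (nhds 0) := by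
      apply tendsto_pow_atTop_nhds_zero_of_lt_one
      · positivity
      · rw [div_lt_one hq0]; linarith
    have hb : Tendsto (fun t : ℕ => (1 / (2:ℝ)) ^ t) atTop (nhds 0) := by
      apply tendsto_pow_atTop_nhds_zero_of_lt_one <;> norm_num
    have hF : ContinuousAt (fun p : ℝ × ℝ =>
        2 * (1 - (1 - p.2) / q - ((m : ℝ) + 1) * (1 - p.1 * p.2) / (2 * q - 1)) / (1 + p.1))
        (0, 0) := by
      apply ContinuousAt.div
      · fun_prop
      · fun_prop
      · norm_num
    have hcomp := hF.tendsto.comp (ha.prodMk_nhds hb)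
    have hcomp' : Tendsto
        (fun t : ℕ => 2 * (1 - (1 - (1 / (2:ℝ)) ^ t) / q
            - ((m : ℝ) + 1) * (1 - (1 / q) ^ t * (1 / (2:ℝ)) ^ t) / (2 * q - 1))
          / (1 + (1 / q) ^ t))
        atTop (nhds (2 * (1 - 1 / q - ((m : ℝ) + 1) / (2 * q - 1)))) := by
      convert hcomp using 2
      all_goals norm_num
    refine Tendsto.congr' ?_ hcomp'
    filter_upwards [eventually_ge_atTop 1] with t ht
    have hqt0 : (0:ℝ) < q ^ t := by positivity
    have h2t : (0:ℝ) < (2:ℝ) ^ t := by positivity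
    have e0 : q ^ (2 * t) = q ^ t * q ^ t := by rw [two_mul, pow_add]
    have hq2t : q ^ (2 * t - 1) = q ^ t * q ^ t / q := by
      rw [eq_div_iff hqne, ← e0, ← pow_succ]
      congr 1
      omega
    have e1 : (2 * q ^ 2) ^ t = 2 ^ t * (q ^ t * q ^ t) := by
      rw [mul_pow, ← pow_mul, mul_comm 2 t, pow_mul]
      ring
    have e2 : (2 * q) ^ t = 2 ^ t * q ^ t := mul_pow 2 q t
    have e3 : ((1:ℝ) / q) ^ t = 1 / q ^ t := by rw [div_pow, one_pow]
    have e4 : ((1:ℝ) / 2) ^ t = 1 / (2:ℝ) ^ t := by rw [div_pow, one_pow]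
    rw [hq2t, e1, e2, e3, e4]
    have hqt1 : q ^ t + 1 ≠ 0 := by positivity
    field_simp
    ring
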